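/- arXiv:1103.0169 — 3 statements merged into one kernel-verified Lean document; each statement's English description precedes it below -/
import Mathlib

section
/- Let M be an invertible real n×n matrix that is exponentially stable (there exist c, β > 0 with ‖e^{Mt}‖ ≤ c e^{-βt} for all t ≥ 0), and let x̃ : ℝ → ℝⁿ be C² with bounded first and second derivatives. Then the function x(t) = -∫₀^∞ e^{Mu} M x̃(t-u) du satisfies x'(t) = M(x(t) - x̃(t)) for all t. -/
open Filter Set MeasureTheory Topology

section Aux
variable {n : ℕ}

lemma exp_cont (M : EuclideanSpace ℝ (Fin n) →L[ℝ] EuclideanSpace ℝ (Fin n)) :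
    Continuous fun u : ℝ => NormedSpace.exp (u • M) :=
  continuous_iff_continuousAt.2 fun u => (hasDerivAt_exp_smul_const' M u).continuousAt

lemma key_integrable (M : EuclideanSpace ℝ (Fin n) →L[ℝ] EuclideanSpace ℝ (Fin n))
    {c β : ℝ} (hc : 0 < c) (hβ : 0 < β)
    (hstab : ∀ t : ℝ, 0 ≤ t → ‖NormedSpace.exp (t • M)‖ ≤ c * Real.exp (-β * t))
    (w : ℝ → EuclideanSpace ℝ (Fin n)) (hw : Continuous w) (K : ℝ) (hK : ∀ s, ‖w s‖ ≤ K) :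
    IntegrableOn (fun u => NormedSpace.exp (u • M) (w u)) (Ioi 0) := by
  apply Integrable.mono' ((exp_neg_integrableOn_Ioi 0 hβ).const_mul (c * K))
  · exact ((exp_cont M).clm_apply hw).aestronglyMeasurable
  · filter_upwards [ae_restrict_mem measurableSet_Ioi] with u hu
    calc ‖NormedSpace.exp (u • M) (w u)‖
        ≤ ‖NormedSpace.exp (u • M)‖ * ‖w u‖ := (NormedSpace.exp (u • M)).le_opNorm _
    _ ≤ (c * Real.exp (-β * u)) * K :=
        mul_le_mul (hstab u (le_of_lt hu)) (hK u) (norm_nonneg _) (by positivity)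
    _ = c * K * Real.exp (-β * u) := by ring

end Aux

/-- For an invertible, exponentially stable linear operator `M` on `ℝⁿ`
and a `C²` quasi-static equilibrium `xQ` with bounded first and second derivatives
(and `xQ` itself bounded), the function `x(t) = -∫₀^∞ e^{Mu} M xQ(t-u) du` satisfies
`x'(t) = M (x(t) - xQ(t))` for all `t`. -/
theorem stmt_0 (n : ℕ)
    (M : EuclideanSpace ℝ (Fin n) →L[ℝ] EuclideanSpace ℝ (Fin n))
    (hMinv : IsUnit M)
    (c β : ℝ) (hc : 0 < c) (hβ : 0 < β)
    (hstab : ∀ t : ℝ, 0 ≤ t → ‖NormedSpace.exp (t • M)‖ ≤ c * Real.exp (-β * t))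
    (xQ : ℝ → EuclideanSpace ℝ (Fin n)) (hxQ : ContDiff ℝ 2 xQ)
    (C : ℝ) (hbdd : ∀ t : ℝ, ‖xQ t‖ ≤ C ∧ ‖deriv xQ t‖ ≤ C ∧ ‖deriv (deriv xQ) t‖ ≤ C)
    (x : ℝ → EuclideanSpace ℝ (Fin n))
    (hx : ∀ t : ℝ, x t = -∫ u in Ioi (0:ℝ), NormedSpace.exp (u • M) (M (xQ (t - u)))) :
    ∀ t : ℝ, HasDerivAt x (M (x t - xQ t)) t := by
  intro t
  have hxQ1 : Differentiable ℝ xQ := hxQ.differentiable two_ne_zero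
  have hxQ'c : Continuous (deriv xQ) := hxQ.continuous_deriv one_le_two
  set F : ℝ → ℝ → EuclideanSpace ℝ (Fin n) :=
    fun s u => NormedSpace.exp (u • M) (M (xQ (s - u))) with hFdef
  set G : ℝ → ℝ → EuclideanSpace ℝ (Fin n) :=
    fun s u => NormedSpace.exp (u • M) (M (deriv xQ (s - u))) with hGdef
  -- integrability
  have hFint : ∀ s, IntegrableOn (F s) (Ioi 0) := by
    intro s
    exact key_integrable M hc hβ hstab _
      (M.continuous.comp (hxQ.continuous.comp (continuous_const.sub continuous_id)))
      (‖M‖ * C) (fun u => (M.le_opNorm _).trans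
        (mul_le_mul_of_nonneg_left (hbdd _).1 (norm_nonneg M)))
  have hGint : ∀ s, IntegrableOn (G s) (Ioi 0) := by
    intro s
    exact key_integrable M hc hβ hstab _
      (M.continuous.comp (hxQ'c.comp (continuous_const.sub continuous_id)))
      (‖M‖ * C) (fun u => (M.le_opNorm _).trans
        (mul_le_mul_of_nonneg_left (hbdd _).2.1 (norm_nonneg M)))
  have hMFint : IntegrableOn (fun u => M (F t u)) (Ioi 0) :=
    M.integrable_comp (hFint t)
  -- pointwise bounds
  have hFb : ∀ s u : ℝ, 0 ≤ u → ‖F s u‖ ≤ c * (‖M‖ * C) * Real.exp (-β * u) := by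
    intro s u hu
    calc ‖F s u‖ ≤ ‖NormedSpace.exp (u • M)‖ * ‖M (xQ (s - u))‖ :=
          (NormedSpace.exp (u • M)).le_opNorm _
    _ ≤ (c * Real.exp (-β * u)) * (‖M‖ * C) := by
        apply mul_le_mul (hstab u hu) _ (norm_nonneg _) (by positivity)
        exact (M.le_opNorm _).trans (mul_le_mul_of_nonneg_left (hbdd _).1 (norm_nonneg M))
    _ = c * (‖M‖ * C) * Real.exp (-β * u) := by ring
  have hGb : ∀ s u : ℝ, 0 ≤ u → ‖G s u‖ ≤ c * (‖M‖ * C) * Real.exp (-β * u) := by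
    intro s u hu
    calc ‖G s u‖ ≤ ‖NormedSpace.exp (u • M)‖ * ‖M (deriv xQ (s - u))‖ :=
          (NormedSpace.exp (u • M)).le_opNorm _
    _ ≤ (c * Real.exp (-β * u)) * (‖M‖ * C) := by
        apply mul_le_mul (hstab u hu) _ (norm_nonneg _) (by positivity)
        exact (M.le_opNorm _).trans (mul_le_mul_of_nonneg_left (hbdd _).2.1 (norm_nonneg M))
    _ = c * (‖M‖ * C) * Real.exp (-β * u) := by ring
  -- derivative in u
  have hderivu : ∀ u : ℝ, HasDerivAt (fun u => F t u) (M (F t u) - G t u) u := by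
    intro u
    have h1 : HasDerivAt (fun u : ℝ => NormedSpace.exp (u • M))
        (M * NormedSpace.exp (u • M)) u := hasDerivAt_exp_smul_const' M u
    have h2 : HasDerivAt (fun u : ℝ => t - u) (-1) u := (hasDerivAt_id u).const_sub t
    have h3 : HasDerivAt (fun u : ℝ => xQ (t - u)) ((-1 : ℝ) • deriv xQ (t - u)) u :=
      (hxQ1 (t - u)).hasDerivAt.scomp u h2
    have h4 : HasDerivAt (fun u : ℝ => M (xQ (t - u)))
        (M ((-1 : ℝ) • deriv xQ (t - u))) u := M.hasFDerivAt.comp_hasDerivAt u h3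
    have h5 := h1.clm_apply h4
    refine h5.congr_deriv ?_
    simp [F, G, ContinuousLinearMap.mul_apply, sub_eq_add_neg]
  -- F t tends to 0 at infinity
  have hexp0 : Tendsto (fun u : ℝ => c * (‖M‖ * C) * Real.exp (-β * u)) atTop (𝓝 0) := by
    have hinf : Tendsto (fun u : ℝ => -β * u) atTop atBot := by
      have h1 : Tendsto (fun u : ℝ => β * u) atTop atTop := tendsto_id.const_mul_atTop hβ
      exact (tendsto_neg_atTop_atBot.comp h1).congr fun u => by
        simp [Function.comp_def, neg_mul]
    have h3 := (Real.tendsto_exp_atBot.comp hinf).const_mul (c * (‖M‖ * C))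
    rw [mul_zero] at h3
    exact h3
  have htend : Tendsto (F t) atTop (𝓝 0) := by
    apply squeeze_zero_norm' _ hexp0
    filter_upwards [eventually_ge_atTop (0 : ℝ)] with u hu using hFb t u hu
  -- integration by parts
  have hIBP : (∫ u in Ioi (0:ℝ), (M (F t u) - G t u)) = 0 - F t 0 :=
    integral_Ioi_of_hasDerivAt_of_tendsto
      (hderivu 0).continuousAt.continuousWithinAt
      (fun u _ => hderivu u) (hMFint.sub (hGint t)) htend
  have hF0 : F t 0 = M (xQ t) := by
    show NormedSpace.exp ((0:ℝ) • M) (M (xQ (t - 0))) = M (xQ t)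
    have hz : (0:ℝ) • M = 0 := zero_smul ℝ M
    rw [hz, NormedSpace.exp_zero, sub_zero, ContinuousLinearMap.one_apply]
  have hsplit : (∫ u in Ioi (0:ℝ), (M (F t u) - G t u))
      = M (∫ u in Ioi (0:ℝ), F t u) - ∫ u in Ioi (0:ℝ), G t u := by
    rw [integral_sub hMFint (hGint t), ContinuousLinearMap.integral_comp_comm M (hFint t)]
  have hkey : (∫ u in Ioi (0:ℝ), G t u)
      = M (∫ u in Ioi (0:ℝ), F t u) + M (xQ t) := by
    have h := hIBP
    rw [hsplit, hF0, zero_sub] at h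
    rw [← neg_neg (M (xQ t)), ← h]
    abel
  -- differentiation under the integral sign
  have hder : HasDerivAt (fun s => ∫ u in Ioi (0:ℝ), F s u) (∫ u in Ioi (0:ℝ), G t u) t := by
    have h := hasDerivAt_integral_of_dominated_loc_of_deriv_le
      (μ := volume.restrict (Ioi (0:ℝ))) (F := F) (F' := G)
      (bound := fun u => c * (‖M‖ * C) * Real.exp (-β * u)) (Metric.ball_mem_nhds t zero_lt_one)
      (Eventually.of_forall fun s =>
        ((exp_cont M).clm_apply
          (M.continuous.comp (hxQ.continuous.comp
            (continuous_const.sub continuous_id)))).aestronglyMeasurable)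
      (hFint t)
      (((exp_cont M).clm_apply
          (M.continuous.comp (hxQ'c.comp
            (continuous_const.sub continuous_id)))).aestronglyMeasurable)
      ?_ (((exp_neg_integrableOn_Ioi 0 hβ).const_mul (c * (‖M‖ * C)))) ?_
    · exact h.2
    · filter_upwards [ae_restrict_mem measurableSet_Ioi] with u hu
      intro s _
      exact hGb s u (le_of_lt hu)
    · apply Eventually.of_forall
      intro u s _
      have h2 : HasDerivAt (fun s : ℝ => s - u) 1 s := (hasDerivAt_id s).sub_const u
      have h3 : HasDerivAt (fun s : ℝ => xQ (s - u)) ((1 : ℝ) • deriv xQ (s - u)) s :=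
        (hxQ1 (s - u)).hasDerivAt.scomp s h2
      have h4 := ((NormedSpace.exp (u • M)).comp M).hasFDerivAt.comp_hasDerivAt s h3
      simpa [F, G, Function.comp_def] using h4
  -- conclusion
  have hxfun : x = fun s => -∫ u in Ioi (0:ℝ), F s u := by
    funext s
    rw [hx s]
  have hxd : HasDerivAt x (-(∫ u in Ioi (0:ℝ), G t u)) t := by
    rw [hxfun]; exact hder.neg
  have hfinal : M (x t - xQ t) = -(∫ u in Ioi (0:ℝ), G t u) := by
    rw [hkey, hxfun]
    simp only [map_sub, map_neg]
    abel
  rw [hfinal]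
  exact hxd
end

section
/- Suppose M is a real n×n matrix with ‖e^{Mu}‖ ≤ c e^{-βu} for all u ≥ 0 (c, β > 0), x̃ : ℝ → ℝⁿ is C¹, and x(t) - x̃(t) = -∫₀^∞ e^{Mu} x̃'(t-u) du. If sup_{s ≤ t} |x̃'(s)| = r_max(t) < ∞, then |x(t) - x̃(t)| ≤ (c/β) · r_max(t). In particular, if (c/β) r_max(t) < R then |x(t) - x̃(t)| < R (the system avoids R-tipping at time t). -/
open Filter Set

open MeasureTheory

/-- If `‖e^{Mu}‖ ≤ c e^{-βu}` for `u ≥ 0`, `xQ` (the quasi-static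
equilibrium `x̃`) is `C¹`, `x(t) - xQ(t) = -∫₀^∞ e^{Mu} xQ'(t-u) du`, and
`rmax` bounds `‖xQ'(s)‖` for all `s ≤ t`, then `‖x(t) - xQ(t)‖ ≤ (c/β) rmax`;
in particular if `(c/β) rmax < R` then `‖x(t) - xQ(t)‖ < R` (no R-tipping at time `t`). -/
theorem stmt_4 (n : ℕ)
    (M : EuclideanSpace ℝ (Fin n) →L[ℝ] EuclideanSpace ℝ (Fin n))
    (c β : ℝ) (hc : 0 < c) (hβ : 0 < β)
    (hstab : ∀ u : ℝ, 0 ≤ u → ‖NormedSpace.exp (u • M)‖ ≤ c * Real.exp (-β * u))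
    (xQ : ℝ → EuclideanSpace ℝ (Fin n)) (hxQ : ContDiff ℝ 1 xQ)
    (x : ℝ → EuclideanSpace ℝ (Fin n)) (t : ℝ)
    (hx : x t - xQ t = -∫ u in Ioi (0:ℝ), NormedSpace.exp (u • M) (deriv xQ (t - u)))
    (rmax : ℝ) (hrmax : ∀ s : ℝ, s ≤ t → ‖deriv xQ s‖ ≤ rmax) :
    ‖x t - xQ t‖ ≤ (c / β) * rmax ∧
      (∀ R : ℝ, (c / β) * rmax < R → ‖x t - xQ t‖ < R) := by
  have hr0 : 0 ≤ rmax := le_trans (norm_nonneg _) (hrmax t le_rfl)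
  have hg : IntegrableOn (fun u : ℝ => c * Real.exp (-β * u) * rmax) (Ioi 0) := by
    have := exp_neg_integrableOn_Ioi 0 hβ
    exact (this.const_mul c).mul_const rmax
  have key : ‖x t - xQ t‖ ≤ (c / β) * rmax := by
    rw [hx, norm_neg]
    have hbound : ‖∫ u in Ioi (0:ℝ), NormedSpace.exp (u • M) (deriv xQ (t - u))‖
        ≤ ∫ u in Ioi (0:ℝ), c * Real.exp (-β * u) * rmax := by
      refine norm_integral_le_of_norm_le hg ?_
      filter_upwards [self_mem_ae_restrict measurableSet_Ioi] with u hu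
      have hu0 : (0:ℝ) ≤ u := le_of_lt hu
      calc ‖NormedSpace.exp (u • M) (deriv xQ (t - u))‖
          ≤ ‖NormedSpace.exp (u • M)‖ * ‖deriv xQ (t - u)‖ :=
            (NormedSpace.exp (u • M)).le_opNorm _
        _ ≤ (c * Real.exp (-β * u)) * rmax := by
            apply mul_le_mul (hstab u hu0) (hrmax _ (by linarith)) (norm_nonneg _)
            positivity
    refine hbound.trans_eq ?_
    have h := integral_comp_mul_left_Ioi (fun x => Real.exp (-x)) 0 hβ
    simp only [mul_zero, neg_zero, Real.exp_zero, smul_eq_mul] at h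
    rw [show (fun u : ℝ => c * Real.exp (-β*u) * rmax)
        = fun u => (c * rmax) * Real.exp (-(β*u)) by funext u; ring_nf]
    rw [MeasureTheory.integral_const_mul, h]
    simp [integral_exp_neg_Ioi, integral_exp_Iic_zero]
    ring
  exact ⟨key, fun R hR => lt_of_le_of_lt key hR⟩
end

section
/- For the scalar linear tracking model dx/dt = m(x - x̃(t)) with m < 0 and x̃ C¹ with |x̃'(t)| ≤ r_max for all t, the particular solution x(t) = -∫₀^∞ e^{mu} m x̃(t-u) du satisfies |x(t) - x̃(t)| ≤ r_max/|m| for all t. Hence if r_max < R|m|, the solution never leaves the tipping radius R around the quasi-static equilibrium x̃. -/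
open Set MeasureTheory Filter Real

lemma exp_int {m : ℝ} (hm : m < 0) : IntegrableOn (fun u : ℝ => Real.exp (m * u)) (Ioi 0) := by
  have := exp_neg_integrableOn_Ioi 0 (b := -m) (by linarith)
  simpa using this

lemma exp_tendsto {m : ℝ} (hm : m < 0) :
    Tendsto (fun u : ℝ => Real.exp (m * u)) atTop (nhds 0) := by
  have hb : (0:ℝ) < -m := by linarith
  have := Real.tendsto_exp_neg_atTop_nhds_zero.comp (Tendsto.const_mul_atTop hb (tendsto_id (α := ℝ)))
  refine this.congr fun u => ?_
  simp [Function.comp_def, neg_mul, neg_neg]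

lemma lin_tendsto {m : ℝ} (hm : m < 0) : Tendsto (fun u : ℝ => u * Real.exp (m * u)) atTop (nhds 0) := by
  have hb : (0:ℝ) < -m := by linarith
  have hm0 : m ≠ 0 := ne_of_lt hm
  have h1 : Tendsto (fun u : ℝ => (-m) * u) atTop atTop :=
    Tendsto.const_mul_atTop hb tendsto_id
  have h2 := (Real.tendsto_pow_mul_exp_neg_atTop_nhds_zero 1).comp h1
  have h3 : Tendsto (fun u : ℝ => (1 / (-m)) * (((-m) * u)^1 * Real.exp (-((-m)*u)))) atTop (nhds 0) := by
    simpa using h2.const_mul (1 / (-m))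
  refine h3.congr fun u => ?_
  field_simp

lemma hasDeriv1 {m : ℝ} (hm : m < 0) (u : ℝ) :
    HasDerivAt (fun u : ℝ => Real.exp (m * u) / m) (Real.exp (m * u)) u := by
  have h := ((hasDerivAt_id u).const_mul m).exp.div_const m
  simpa [mul_comm, ne_of_lt hm] using h

lemma hasDeriv2 {m : ℝ} (hm : m < 0) (u : ℝ) :
    HasDerivAt (fun u : ℝ => (m * u - 1) / m ^ 2 * Real.exp (m * u))
      (u * Real.exp (m * u)) u := by
  have h1 : HasDerivAt (fun u : ℝ => (m * u - 1) / m ^ 2) (m / m ^ 2) u := by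
    have := (((hasDerivAt_id u).const_mul m).sub_const 1).div_const (m ^ 2)
    simpa [mul_comm] using this
  have h2 : HasDerivAt (fun u : ℝ => Real.exp (m * u)) (m * Real.exp (m * u)) u := by
    have := ((hasDerivAt_id u).const_mul m).exp
    simpa [mul_comm] using this
  have := h1.fun_mul h2
  refine this.congr_deriv ?_
  have hm0 : (m:ℝ) ≠ 0 := ne_of_lt hm
  field_simp
  ring

lemma tendsto2 {m : ℝ} (hm : m < 0) :
    Tendsto (fun u : ℝ => (m * u - 1) / m ^ 2 * Real.exp (m * u)) atTop (nhds 0) := by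
  have h1 := (lin_tendsto hm).const_mul (1 / m)
  have h3 := (exp_tendsto hm).const_mul (-1 / m ^ 2)
  have h := h1.add h3
  simp only [mul_zero, add_zero] at h
  refine h.congr fun u => ?_
  have hm0 : (m:ℝ) ≠ 0 := ne_of_lt hm
  field_simp
  ring

lemma mul_exp_int {m : ℝ} (hm : m < 0) : IntegrableOn (fun u : ℝ => u * Real.exp (m * u)) (Ioi 0) :=
  integrableOn_Ioi_deriv_of_nonneg' (fun u _ => hasDeriv2 hm u)
    (fun u hu => mul_nonneg (le_of_lt hu) (Real.exp_pos _).le) (tendsto2 hm)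

lemma int_exp_eq {m : ℝ} (hm : m < 0) : ∫ u in Ioi (0:ℝ), Real.exp (m * u) = -1 / m := by
  have := integral_Ioi_of_hasDerivAt_of_tendsto' (f := fun u : ℝ => Real.exp (m * u) / m)
    (f' := fun u : ℝ => Real.exp (m * u)) (a := 0)
    (fun u _ => hasDeriv1 hm u) (exp_int hm) ((exp_tendsto hm).div_const m)
  rw [this]
  simp
  ring

lemma int_mul_exp_eq {m : ℝ} (hm : m < 0) :
    ∫ u in Ioi (0:ℝ), u * Real.exp (m * u) = 1 / m ^ 2 := by
  have := integral_Ioi_of_hasDerivAt_of_tendsto'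
    (f := fun u : ℝ => (m * u - 1) / m ^ 2 * Real.exp (m * u))
    (f' := fun u : ℝ => u * Real.exp (m * u)) (a := 0)
    (fun u _ => hasDeriv2 hm u) (mul_exp_int hm) (tendsto2 hm)
  rw [this]
  have hm0 : (m:ℝ) ≠ 0 := ne_of_lt hm
  field_simp
  simp


/-- For the scalar linear tracking model `dx/dt = m(x - xQ(t))` with
`m < 0` and `xQ` (the quasi-static equilibrium `x̃`) `C¹` with `|xQ'(t)| ≤ rmax`, the
particular solution `x(t) = -∫₀^∞ e^{mu} m xQ(t-u) du` satisfies
`|x(t) - xQ(t)| ≤ rmax/|m|` for all `t`; hence if `rmax < R|m|` the solution never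
leaves the tipping radius `R` around `xQ`. -/
theorem stmt_19 (m : ℝ) (hm : m < 0)
    (xQ : ℝ → ℝ) (hxQ : ContDiff ℝ 1 xQ)
    (rmax : ℝ) (hrmax : ∀ t : ℝ, |deriv xQ t| ≤ rmax)
    (x : ℝ → ℝ)
    (hx : ∀ t : ℝ, x t = -∫ u in Ioi (0:ℝ), Real.exp (m * u) * m * xQ (t - u)) :
    (∀ t : ℝ, |x t - xQ t| ≤ rmax / |m|) ∧
    (∀ R : ℝ, rmax < R * |m| → ∀ t : ℝ, |x t - xQ t| < R) := by
  have hm0 : m ≠ 0 := ne_of_lt hm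
  have habs : (0:ℝ) < |m| := abs_pos.mpr hm0
  have hr0 : 0 ≤ rmax := le_trans (abs_nonneg _) (hrmax 0)
  have lip : ∀ a b : ℝ, |xQ a - xQ b| ≤ rmax * |a - b| := by
    intro a b
    have := convex_univ.norm_image_sub_le_of_norm_deriv_le
      (f := xQ) (C := rmax)
      (fun y _ => (hxQ.differentiable one_ne_zero).differentiableAt)
      (fun y _ => by simpa [Real.norm_eq_abs] using hrmax y)
      (mem_univ b) (mem_univ a)
    simpa [Real.norm_eq_abs] using this
  have hpart1 : ∀ t : ℝ, |x t - xQ t| ≤ rmax / |m| := by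
    intro t
    -- integrability of the main integrand
    have hcont : Continuous (fun u : ℝ => Real.exp (m * u) * m * xQ (t - u)) := by
      exact ((Real.continuous_exp.comp (continuous_const.mul continuous_id)).mul
        continuous_const).mul (hxQ.continuous.comp (continuous_const.sub continuous_id))
    have hbound : ∀ u ∈ Ioi (0:ℝ), |xQ (t - u)| ≤ |xQ t| + rmax * u := by
      intro u hu
      have h1 : |xQ (t - u) - xQ t| ≤ rmax * u := by
        have := lip (t - u) t
        simpa [abs_of_pos (mem_Ioi.mp hu)] using this
      have h2 := abs_sub_abs_le_abs_sub (xQ (t - u)) (xQ t)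
      linarith
    have hg_int : IntegrableOn
        (fun u : ℝ => |m| * |xQ t| * Real.exp (m * u) + |m| * rmax * (u * Real.exp (m * u)))
        (Ioi 0) :=
      ((exp_int hm).const_mul _).add ((mul_exp_int hm).const_mul _)
    have hint1 : IntegrableOn (fun u : ℝ => Real.exp (m * u) * m * xQ (t - u)) (Ioi 0) := by
      refine hg_int.mono' (hcont.aestronglyMeasurable.restrict) ?_
      filter_upwards [ae_restrict_mem measurableSet_Ioi] with u hu
      have hu0 : (0:ℝ) < u := mem_Ioi.mp hu
      have he : (0:ℝ) < Real.exp (m * u) := Real.exp_pos _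
      have := hbound u hu
      rw [Real.norm_eq_abs, abs_mul, abs_mul, abs_of_pos he]
      calc Real.exp (m * u) * |m| * |xQ (t - u)|
          ≤ Real.exp (m * u) * |m| * (|xQ t| + rmax * u) := by
            apply mul_le_mul_of_nonneg_left this (by positivity)
        _ = |m| * |xQ t| * Real.exp (m * u) + |m| * rmax * (u * Real.exp (m * u)) := by ring
    have hint2 : IntegrableOn (fun u : ℝ => Real.exp (m * u) * m * xQ t) (Ioi 0) := by
      simpa only [mul_assoc, IntegrableOn] using ((exp_int hm).mul_const (m * xQ t))
    have hI2 : ∫ u in Ioi (0:ℝ), Real.exp (m * u) * m * xQ t = -xQ t := by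
      have : ∫ u in Ioi (0:ℝ), Real.exp (m * u) * m * xQ t
          = (∫ u in Ioi (0:ℝ), Real.exp (m * u)) * (m * xQ t) := by
        rw [← integral_mul_const]; congr 1; ext u; ring
      rw [this, int_exp_eq hm]
      field_simp
    -- key identity
    have hkey : x t - xQ t
        = -∫ u in Ioi (0:ℝ), Real.exp (m * u) * m * (xQ (t - u) - xQ t) := by
      have hsub : ∫ u in Ioi (0:ℝ), Real.exp (m * u) * m * (xQ (t - u) - xQ t)
          = (∫ u in Ioi (0:ℝ), Real.exp (m * u) * m * xQ (t - u))
            - ∫ u in Ioi (0:ℝ), Real.exp (m * u) * m * xQ t := by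
        rw [← integral_sub hint1 hint2]; congr 1; ext u; ring
      rw [hsub, hI2, hx t]; ring
    rw [hkey]
    have hbd : ‖∫ u in Ioi (0:ℝ), Real.exp (m * u) * m * (xQ (t - u) - xQ t)‖
        ≤ ∫ u in Ioi (0:ℝ), |m| * rmax * (u * Real.exp (m * u)) := by
      refine norm_integral_le_of_norm_le ((mul_exp_int hm).const_mul _) ?_
      filter_upwards [ae_restrict_mem measurableSet_Ioi] with u hu
      have hu0 : (0:ℝ) < u := mem_Ioi.mp hu
      have he : (0:ℝ) < Real.exp (m * u) := Real.exp_pos _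
      have h1 : |xQ (t - u) - xQ t| ≤ rmax * u := by
        have := lip (t - u) t
        simpa [abs_of_pos hu0] using this
      rw [Real.norm_eq_abs, abs_mul, abs_mul, abs_of_pos he]
      calc Real.exp (m * u) * |m| * |xQ (t - u) - xQ t|
          ≤ Real.exp (m * u) * |m| * (rmax * u) := by
            apply mul_le_mul_of_nonneg_left h1 (by positivity)
        _ = |m| * rmax * (u * Real.exp (m * u)) := by ring
    have hval : ∫ u in Ioi (0:ℝ), |m| * rmax * (u * Real.exp (m * u)) = rmax / |m| := by
      rw [integral_const_mul, int_mul_exp_eq hm, ← sq_abs m]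
      field_simp
    rw [abs_neg, ← Real.norm_eq_abs]
    calc ‖∫ u in Ioi (0:ℝ), Real.exp (m * u) * m * (xQ (t - u) - xQ t)‖
        ≤ ∫ u in Ioi (0:ℝ), |m| * rmax * (u * Real.exp (m * u)) := hbd
      _ = rmax / |m| := hval
  refine ⟨hpart1, fun R hR t => lt_of_le_of_lt (hpart1 t) ?_⟩
  rw [div_lt_iff₀ habs]
  exact hR
end
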